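/- (Abstract Balian–Low theorem) Let (𝔛, 𝔓, C) be a Gabor triple, Γ ⊂ R^2 a lattice generated by vectors a, b, and V ⊂ H a closed subspace invariant under all e^{is𝔛} and e^{is𝔓}. Let T_{m,n} = T(a)^m T(b)^n where T(z) = e^{iRe(z)Im(z)/2} e^{iRe(z)𝔛} e^{iIm(z)𝔓}. If φ_0 ∈ V is such that {T_{m,n}φ_0}_{ m,n ∈ Z} is a complete orthonormal system for V, then either φ_0 ∉ D(𝔛) or φ_0 ∉ D(𝔓). -/

import Mathlib

open Filter Topology

local notation "⟪" x ", " y "⟫" => @inner ℂ _ _ x y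

/-- The Weyl operator `T(z) = e^{i z₁ z₂ /2} e^{i z₁ 𝔛} e^{i z₂ 𝔓}` associated
to the unitary groups `U t = e^{it𝔛}`, `V s = e^{is𝔓}`, for `z ∈ ℝ² ≅ ℂ`. -/
noncomputable def weylOpR2 {H : Type*} [NormedAddCommGroup H] [NormedSpace ℂ H]
    (U V : ℝ → H →L[ℂ] H) (w : ℝ × ℝ) : H →L[ℂ] H :=
  Complex.exp (Complex.I * w.1 * w.2 / 2) • (U w.1 * V w.2)

/-- The operators `T_{m,n} = T(a)^m T(b)^n` of the generalized Gabor frame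
associated to the lattice generated by `a, b ∈ ℝ²` (along a fixed ray the
projective phases cancel, so `T(a)^m = T(m·a)`). -/
noncomputable def gaborOp {H : Type*} [NormedAddCommGroup H] [NormedSpace ℂ H]
    (U V : ℝ → H →L[ℂ] H) (a b : ℝ × ℝ) (m n : ℤ) : H →L[ℂ] H :=
  weylOpR2 U V ((m : ℝ) • a) * weylOpR2 U V ((n : ℝ) • b)

section helpers
variable {H : Type*} [NormedAddCommGroup H] [InnerProductSpace ℂ H]

private lemma inner_isom (T : H →L[ℂ] H) (h : ∀ x, ‖T x‖ = ‖x‖) (x y : H) :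
    ⟪T x, T y⟫ = ⟪x, y⟫ :=
  LinearIsometry.inner_map_map ⟨(T : H →ₗ[ℂ] H), h⟩ x y

private lemma hasDerivAt_inner_right (c : H) {g : ℝ → H} {g' : H} {t : ℝ}
    (hg : HasDerivAt g g' t) :
    HasDerivAt (fun s => ⟪c, g s⟫) ⟪c, g'⟫ t := by
  have := (((innerSL ℂ c).restrictScalars ℝ).hasFDerivAt.comp t hg.hasFDerivAt).hasDerivAt
  simpa [Function.comp_def] using this

private lemma hasDerivAt_inner_left (c : H) {g : ℝ → H} {g' : H} {t : ℝ}
    (hg : HasDerivAt g g' t) :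
    HasDerivAt (fun s => ⟪g s, c⟫) ⟪g', c⟫ t := by
  have h1 := hasDerivAt_inner_right c hg
  have h2 := ((Complex.conjCLE.toContinuousLinearMap).hasFDerivAt.comp t h1.hasFDerivAt).hasDerivAt
  simpa [Function.comp_def, Complex.conjCLE_apply, inner_conj_symm] using h2

private lemma conj_exp_I (r : ℝ) :
    (starRingEnd ℂ) (Complex.exp (Complex.I * r)) = Complex.exp (-(Complex.I * r)) := by
  rw [← Complex.exp_conj]
  congr 1
  simp [map_mul, Complex.conj_I]

private lemma hasDerivAt_expI (c : ℂ) (t : ℝ) :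
    HasDerivAt (fun s : ℝ => Complex.exp (c * s)) (c * Complex.exp (c * t)) t := by
  have h : HasDerivAt (fun s : ℝ => c * (s : ℂ)) c t := by
    simpa using (Complex.ofRealCLM.hasDerivAt (x := t)).const_mul c
  simpa [mul_comm] using h.cexp

end helpers

private def lowA (a b : ℝ × ℝ) (m n : ℤ) : ℝ := m * a.1 + n * b.1
private def lowB (a b : ℝ × ℝ) (m n : ℤ) : ℝ := m * a.2 + n * b.2
private noncomputable def lowG (a b : ℝ × ℝ) (m n : ℤ) : ℝ :=
  (m * a.1) * (m * a.2) / 2 + (n * b.1) * (n * b.2) / 2 + (n * b.1) * (m * a.2)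
private noncomputable def lowPhi (a b : ℝ × ℝ) (m n : ℤ) : ℝ :=
  2 * lowG a b m n - lowA a b m n * lowB a b m n

/-- abstract Balian–Low theorem: let `(𝔛, 𝔓, C)` be a Gabor
triple (self-adjoint operators with a common core whose unitary groups satisfy
the Weyl relations), `Γ ⊂ ℝ²` the lattice generated by linearly independent
vectors `a, b`, and `S ⊂ H` a closed subspace invariant under all `e^{is𝔛}`
and `e^{is𝔓}`.  If `φ₀ ∈ S` is such that `{T_{m,n} φ₀}_{m,n ∈ ℤ}` is a
complete orthonormal system for `S`, then `φ₀ ∉ D(𝔛)` or `φ₀ ∉ D(𝔓)`. -/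
theorem abstract_balian_low
    {H : Type*} [NormedAddCommGroup H] [InnerProductSpace ℂ H] [CompleteSpace H]
    (X P : H →ₗ.[ℂ] H) (hXsa : IsSelfAdjoint X) (hPsa : IsSelfAdjoint P)
    (U V : ℝ → H →L[ℂ] H)
    (hUgrp : ∀ t s : ℝ, U (t + s) = U t * U s)
    (hVgrp : ∀ t s : ℝ, V (t + s) = V t * V s)
    (hU0 : U 0 = 1) (hV0 : V 0 = 1)
    (hUnitU : ∀ (t : ℝ) (x : H), ‖U t x‖ = ‖x‖)
    (hUnitV : ∀ (s : ℝ) (x : H), ‖V s x‖ = ‖x‖)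
    (hUgen : ∀ (ψ : X.domain) (t : ℝ),
      HasDerivAt (fun s : ℝ => U s (ψ : H)) (U t (Complex.I • X ψ)) t)
    (hVgen : ∀ (ψ : P.domain) (t : ℝ),
      HasDerivAt (fun s : ℝ => V s (ψ : H)) (V t (Complex.I • P ψ)) t)
    (hWeyl : ∀ t s : ℝ, U t * V s = Complex.exp (-(Complex.I * t * s)) • (V s * U t))
    (C : Submodule ℂ H) (hCX : C ≤ X.domain) (hCP : C ≤ P.domain)
    (hcore : ∀ (ψ : H) (hx : ψ ∈ X.domain) (hp : ψ ∈ P.domain),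
      ∃ ξ : ℕ → C,
        Tendsto (fun i => (ξ i : H)) atTop (𝓝 ψ) ∧
        Tendsto (fun i => X ⟨(ξ i : H), hCX (ξ i).2⟩) atTop (𝓝 (X ⟨ψ, hx⟩)) ∧
        Tendsto (fun i => P ⟨(ξ i : H), hCP (ξ i).2⟩) atTop (𝓝 (P ⟨ψ, hp⟩)))
    -- the lattice `Γ` is generated by linearly independent `a, b ∈ ℝ²`:
    (a b : ℝ × ℝ) (hab : LinearIndependent ℝ ![a, b])
    -- `S` is a closed subspace invariant under the unitary groups:
    (S : Submodule ℂ H) (hSclosed : IsClosed (S : Set H))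
    (hSinv : ∀ (s : ℝ) (ψ : H), ψ ∈ S → U s ψ ∈ S ∧ V s ψ ∈ S)
    -- `{T_{m,n} φ₀}` is a complete orthonormal system for `S`:
    (φ₀ : H) (hφ₀S : φ₀ ∈ S)
    (horth : ∀ m n m' n' : ℤ,
      ⟪gaborOp U V a b m n φ₀, gaborOp U V a b m' n' φ₀⟫ =
        if m = m' ∧ n = n' then (1 : ℂ) else 0)
    (hcomplete : ∀ ψ ∈ S, (∀ m n : ℤ, ⟪gaborOp U V a b m n φ₀, ψ⟫ = 0) → ψ = 0) :
    φ₀ ∉ X.domain ∨ φ₀ ∉ P.domain := by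
  by_contra hcon
  push_neg at hcon
  obtain ⟨hx, hp⟩ := hcon
  classical
  set Xf := X ⟨φ₀, hx⟩ with hXfdef
  set Pf := P ⟨φ₀, hp⟩ with hPfdef
  -- basic unitary group facts
  have hUU : ∀ (t : ℝ) (x : H), U t (U (-t) x) = x := by
    intro t x
    have h : U t * U (-t) = 1 := by rw [← hUgrp]; simp [hU0]
    have := congrArg (fun A : H →L[ℂ] H => A x) h
    simpa using this
  have hVV : ∀ (s : ℝ) (x : H), V s (V (-s) x) = x := by
    intro s x
    have h : V s * V (-s) = 1 := by rw [← hVgrp]; simp [hV0]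
    have := congrArg (fun A : H →L[ℂ] H => A x) h
    simpa using this
  have hUadd : ∀ (t s : ℝ) (x : H), U t (U s x) = U (t + s) x := by
    intro t s x; rw [hUgrp]; rfl
  have hVadd : ∀ (t s : ℝ) (x : H), V t (V s x) = V (t + s) x := by
    intro t s x; rw [hVgrp]; rfl
  have adjU : ∀ (t : ℝ) (x y : H), ⟪U t x, y⟫ = ⟪x, U (-t) y⟫ := by
    intro t x y
    conv_lhs => rw [← hUU t y]
    exact inner_isom (U t) (hUnitU t) x (U (-t) y)
  have adjV : ∀ (s : ℝ) (x y : H), ⟪V s x, y⟫ = ⟪x, V (-s) y⟫ := by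
    intro s x y
    conv_lhs => rw [← hVV s y]
    exact inner_isom (V s) (hUnitV s) x (V (-s) y)
  have adjU' : ∀ (t : ℝ) (x y : H), ⟪x, U t y⟫ = ⟪U (-t) x, y⟫ := by
    intro t x y
    have := adjU (-t) x y
    rw [neg_neg] at this
    exact this.symm
  have adjV' : ∀ (s : ℝ) (x y : H), ⟪x, V s y⟫ = ⟪V (-s) x, y⟫ := by
    intro s x y
    have := adjV (-s) x y
    rw [neg_neg] at this
    exact this.symm
  -- pointwise Weyl relations
  have weylUV : ∀ (t s : ℝ) (x : H),
      U t (V s x) = Complex.exp (-(Complex.I * t * s)) • V s (U t x) := by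
    intro t s x
    have := congrArg (fun A : H →L[ℂ] H => A x) (hWeyl t s)
    simpa using this
  have weylVU : ∀ (t s : ℝ) (x : H),
      V s (U t x) = Complex.exp (Complex.I * t * s) • U t (V s x) := by
    intro t s x
    rw [weylUV t s x, smul_smul, ← Complex.exp_add]
    simp
  -- application form of the Gabor operators
  have gaborApp : ∀ (m n : ℤ) (v : H), gaborOp U V a b m n v
      = Complex.exp (Complex.I * lowG a b m n) • U (lowA a b m n) (V (lowB a b m n) v) := by
    intro m n v
    have h1 : gaborOp U V a b m n v
        = Complex.exp (Complex.I * ((m : ℝ) * a.1) * ((m : ℝ) * a.2) / 2) •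
            U ((m : ℝ) * a.1) (V ((m : ℝ) * a.2)
              (Complex.exp (Complex.I * ((n : ℝ) * b.1) * ((n : ℝ) * b.2) / 2) •
                U ((n : ℝ) * b.1) (V ((n : ℝ) * b.2) v))) := by
      simp [gaborOp, weylOpR2, ContinuousLinearMap.mul_apply, Prod.smul_fst, Prod.smul_snd,
        smul_eq_mul, map_smul]
      rw [smul_comm]
    rw [h1]
    simp only [map_smul]
    rw [weylVU ((n : ℝ) * b.1) ((m : ℝ) * a.2) (V ((n : ℝ) * b.2) v)]
    simp only [map_smul, smul_smul]
    rw [hUadd, hVadd, ← Complex.exp_add, ← Complex.exp_add]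
    rw [show ((m : ℝ) * a.1 + (n : ℝ) * b.1) = lowA a b m n from by simp [lowA],
      show ((m : ℝ) * a.2 + (n : ℝ) * b.2) = lowB a b m n from by simp [lowB]]
    congr 2
    push_cast [lowG]
    ring
  have g00 : gaborOp U V a b 0 0 φ₀ = φ₀ := by
    rw [gaborApp]
    simp [lowA, lowB, lowG, hU0, hV0]
  have horth' : ∀ m n : ℤ, ⟪gaborOp U V a b m n φ₀, φ₀⟫
      = (if m = 0 ∧ n = 0 then 1 else 0 : ℂ) := by
    intro m n
    have := horth m n 0 0
    rwa [g00] at this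
  have normf : ⟪φ₀, φ₀⟫ = (1 : ℂ) := by
    have := horth' 0 0
    rw [g00] at this
    simpa using this
  have horth2 : ∀ m n : ℤ, ⟪φ₀, gaborOp U V a b m n φ₀⟫
      = (if m = 0 ∧ n = 0 then 1 else 0 : ℂ) := by
    intro m n
    rw [← inner_conj_symm, horth' m n]
    split <;> simp
  -- membership facts
  have memS : ∀ m n : ℤ, gaborOp U V a b m n φ₀ ∈ S := by
    intro m n
    rw [gaborApp]
    exact S.smul_mem _ ((hSinv _ _ ((hSinv _ _ hφ₀S).2)).1)
  have hUf : ∀ t : ℝ, HasDerivAt (fun s : ℝ => U s φ₀) (U t (Complex.I • Xf)) t :=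
    fun t => hUgen ⟨φ₀, hx⟩ t
  have hVf : ∀ s : ℝ, HasDerivAt (fun r : ℝ => V r φ₀) (V s (Complex.I • Pf)) s :=
    fun s => hVgen ⟨φ₀, hp⟩ s
  have memDer : ∀ (g : ℝ → H) (L : H), (∀ t, g t ∈ S) → HasDerivAt g L 0 → L ∈ S := by
    intro g L hg hL
    have ht := hasDerivAt_iff_tendsto_slope.1 hL
    refine hSclosed.mem_of_tendsto ht (Eventually.of_forall ?_)
    intro t
    simp only [SetLike.mem_coe, slope_def_module]
    exact S.smul_of_tower_mem _ (S.sub_mem (hg t) (hg 0))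
  have hXfS : Xf ∈ S := by
    have h0 : Complex.I • Xf ∈ S := by
      refine memDer _ _ (fun t => (hSinv t φ₀ hφ₀S).1) ?_
      simpa [hU0] using hUf 0
    have := S.smul_mem (-Complex.I) h0
    simpa [smul_smul, Complex.I_mul_I] using this
  have hPfS : Pf ∈ S := by
    have h0 : Complex.I • Pf ∈ S := by
      refine memDer _ _ (fun t => (hSinv t φ₀ hφ₀S).2) ?_
      simpa [hV0] using hVf 0
    have := S.smul_mem (-Complex.I) h0
    simpa [smul_smul, Complex.I_mul_I] using this
  -- derivatives of `t ↦ U (-t) φ₀` and `s ↦ V (-s) φ₀` at `0`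
  have hUneg : HasDerivAt (fun t : ℝ => U (-t) φ₀) (-(Complex.I • Xf)) 0 := by
    have h1 : HasDerivAt (fun t : ℝ => -t) (-1 : ℝ) 0 := (hasDerivAt_id (0 : ℝ)).neg
    have h2 := HasDerivAt.scomp (x := (0 : ℝ)) (hUf (-0)) h1
    simpa [Function.comp_def, hU0] using h2
  have hVneg : HasDerivAt (fun s : ℝ => V (-s) φ₀) (-(Complex.I • Pf)) 0 := by
    have h1 : HasDerivAt (fun t : ℝ => -t) (-1 : ℝ) 0 := (hasDerivAt_id (0 : ℝ)).neg
    have h2 := HasDerivAt.scomp (x := (0 : ℝ)) (hVf (-0)) h1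
    simpa [Function.comp_def, hV0] using h2
  -- Hilbert basis of S and the Parseval identity
  haveI : CompleteSpace S := hSclosed.completeSpace_coe
  let e : ℤ × ℤ → S := fun i => ⟨gaborOp U V a b i.1 i.2 φ₀, memS i.1 i.2⟩
  have he : Orthonormal ℂ e := by
    rw [orthonormal_iff_ite]
    intro i j
    have h1 := horth i.1 i.2 j.1 j.2
    have h2 : (⟪e i, e j⟫ : ℂ)
        = ⟪gaborOp U V a b i.1 i.2 φ₀, gaborOp U V a b j.1 j.2 φ₀⟫ := rfl
    rw [h2, h1]
    by_cases h : i = j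
    · subst h; simp
    · rw [if_neg h, if_neg (fun hc => h (Prod.ext hc.1 hc.2))]
  have hbot : (Submodule.span ℂ (Set.range e))ᗮ = ⊥ := by
    rw [Submodule.eq_bot_iff]
    intro ψ hψ
    have hz : ∀ m n : ℤ, ⟪gaborOp U V a b m n φ₀, (ψ : H)⟫ = 0 := by
      intro m n
      exact (Submodule.mem_orthogonal _ ψ).1 hψ (e (m, n))
        (Submodule.subset_span ⟨(m, n), rfl⟩)
    exact Subtype.ext (by simpa using hcomplete _ ψ.2 hz)
  let bH : HilbertBasis (ℤ × ℤ) ℂ S := HilbertBasis.mkOfOrthogonalEqBot he hbot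
  have hbb : ∀ i : ℤ × ℤ, (bH i : H) = gaborOp U V a b i.1 i.2 φ₀ := by
    intro i
    have h1 : bH i = e i := congrFun (HilbertBasis.coe_mkOfOrthogonalEqBot he hbot) i
    rw [h1]
  have pars : ∀ u v : H, u ∈ S → v ∈ S →
      ∑' i : ℤ × ℤ, ⟪u, gaborOp U V a b i.1 i.2 φ₀⟫ * ⟪gaborOp U V a b i.1 i.2 φ₀, v⟫
        = ⟪u, v⟫ := by
    intro u v hu hv
    have h1 := bH.tsum_inner_mul_inner ⟨u, hu⟩ ⟨v, hv⟩
    have h2 : ∀ i : ℤ × ℤ,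
        (⟪(⟨u, hu⟩ : S), bH i⟫ : ℂ) * ⟪bH i, (⟨v, hv⟩ : S)⟫
          = ⟪u, gaborOp U V a b i.1 i.2 φ₀⟫ * ⟪gaborOp U V a b i.1 i.2 φ₀, v⟫ := by
      intro i
      rw [Submodule.coe_inner, Submodule.coe_inner, hbb i]
    rw [tsum_congr h2] at h1
    simpa [Submodule.coe_inner] using h1
  -- the key symmetry identity for the X-coefficients
  have keyX : ∀ m n : ℤ,
      (starRingEnd ℂ) ⟪gaborOp U V a b m n φ₀, Xf⟫
        = Complex.exp (Complex.I * lowPhi a b m n) * ⟪gaborOp U V a b (-m) (-n) φ₀, Xf⟫ := by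
    intro m n
    have hαn : lowA a b (-m) (-n) = -(lowA a b m n) := by
      simp only [lowA]; push_cast; ring
    have hβn : lowB a b (-m) (-n) = -(lowB a b m n) := by
      simp only [lowB]; push_cast; ring
    have hγn : lowG a b (-m) (-n) = lowG a b m n := by
      simp only [lowG]; push_cast; ring
    set α := lowA a b m n with hαd
    set β := lowB a b m n with hβd
    set γ := lowG a b m n with hγd
    set h : ℝ → ℂ := fun t => ⟪U (t - α) φ₀, V β φ₀⟫ with hhd
    have redL : ∀ t : ℝ, ⟪U t φ₀, gaborOp U V a b m n φ₀⟫
        = Complex.exp (Complex.I * γ) * h t := by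
      intro t
      rw [gaborApp, ← hαd, ← hβd, ← hγd, inner_smul_right, adjU', hUadd]
      simp only [hhd, neg_add_eq_sub]
    have redR : ∀ t : ℝ, ⟪gaborOp U V a b (-m) (-n) φ₀, U (-t) φ₀⟫
        = Complex.exp (Complex.I * α * β - Complex.I * γ) *
            (Complex.exp (-(Complex.I * β) * t) * h t) := by
      intro t
      rw [gaborApp, hαn, hβn, hγn, inner_smul_left, conj_exp_I]
      rw [adjU, neg_neg, hUadd, adjV, neg_neg, weylVU (α + -t) β φ₀, inner_smul_right,
        adjU']
      have harg : -(α + -t) = t - α := by ring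
      rw [harg]
      simp only [hhd]
      rw [← mul_assoc, ← Complex.exp_add, ← mul_assoc, ← Complex.exp_add]
      congr 2
      push_cast
      ring
    have hD : HasDerivAt h ⟪U (-α) (Complex.I • Xf), V β φ₀⟫ 0 := by
      have h1 : HasDerivAt (fun t : ℝ => t - α) 1 0 := (hasDerivAt_id (0 : ℝ)).sub_const α
      have h2 := HasDerivAt.scomp (x := (0 : ℝ)) (hUf (0 - α)) h1
      have h3 : HasDerivAt (fun t : ℝ => U (t - α) φ₀) (U (-α) (Complex.I • Xf)) 0 := by
        simpa [Function.comp_def, zero_sub] using h2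
      rw [hhd]
      exact hasDerivAt_inner_left (V β φ₀) h3
    have dG : HasDerivAt (fun t : ℝ => ⟪U t φ₀, gaborOp U V a b m n φ₀⟫)
        ⟪Complex.I • Xf, gaborOp U V a b m n φ₀⟫ 0 := by
      have := hasDerivAt_inner_left (gaborOp U V a b m n φ₀) (hUf 0)
      simpa [hU0] using this
    have dG' := hD.const_mul (Complex.exp (Complex.I * γ))
    rw [show (fun t : ℝ => Complex.exp (Complex.I * γ) * h t)
        = fun t : ℝ => ⟪U t φ₀, gaborOp U V a b m n φ₀⟫ from
      funext fun t => (redL t).symm] at dG'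
    have eqA := dG.unique dG'
    have dK : HasDerivAt (fun t : ℝ => ⟪gaborOp U V a b (-m) (-n) φ₀, U (-t) φ₀⟫)
        ⟪gaborOp U V a b (-m) (-n) φ₀, -(Complex.I • Xf)⟫ 0 :=
      hasDerivAt_inner_right _ hUneg
    have dph : HasDerivAt (fun t : ℝ => Complex.exp (-(Complex.I * β) * t))
        (-(Complex.I * β)) 0 := by
      simpa using hasDerivAt_expI (-(Complex.I * β)) 0
    have dK' := (dph.mul hD).const_mul (Complex.exp (Complex.I * α * β - Complex.I * γ))
    simp only [Pi.mul_def] at dK'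
    rw [show (fun t : ℝ => Complex.exp (Complex.I * α * β - Complex.I * γ) *
          (Complex.exp (-(Complex.I * β) * t) * h t))
        = fun t : ℝ => ⟪gaborOp U V a b (-m) (-n) φ₀, U (-t) φ₀⟫ from
      funext fun t => (redR t).symm] at dK'
    have eqB := dK.unique dK'
    simp only [Complex.ofReal_zero, mul_zero, Complex.exp_zero, one_mul] at eqB
    have hh0 : Complex.exp (Complex.I * γ) * h 0
        = (if m = 0 ∧ n = 0 then 1 else 0 : ℂ) := by
      have h1 := redL 0
      rw [hU0] at h1
      simp only [ContinuousLinearMap.one_apply] at h1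
      rw [← h1]
      exact horth2 m n
    have hbd : (β : ℂ) * (if m = 0 ∧ n = 0 then 1 else 0 : ℂ) = 0 := by
      rcases Classical.em (m = 0 ∧ n = 0) with hc | hc
      · obtain ⟨rfl, rfl⟩ := hc
        rw [hβd]
        simp [lowB]
      · simp [hc]
    have e5 : Complex.exp (Complex.I * lowPhi a b m n) *
        Complex.exp (Complex.I * α * β - Complex.I * γ) = Complex.exp (Complex.I * γ) := by
      rw [← Complex.exp_add]
      congr 1
      rw [hαd, hβd, hγd]
      simp only [lowPhi]
      push_cast
      ring
    have hsm1 : ⟪Complex.I • Xf, gaborOp U V a b m n φ₀⟫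
        = -(Complex.I * ⟪Xf, gaborOp U V a b m n φ₀⟫) := by
      rw [inner_smul_left, Complex.conj_I]
      ring
    have hsm2 : ⟪gaborOp U V a b (-m) (-n) φ₀, -(Complex.I • Xf)⟫
        = -(Complex.I * ⟪gaborOp U V a b (-m) (-n) φ₀, Xf⟫) := by
      rw [inner_neg_right, inner_smul_right]
    rw [inner_conj_symm]
    linear_combination Complex.I * eqA -
      Complex.I * Complex.exp (Complex.I * lowPhi a b m n) * eqB -
      Complex.I * hsm1 + Complex.I * Complex.exp (Complex.I * lowPhi a b m n) * hsm2 -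
      (Complex.I * ⟪U (-α) (Complex.I • Xf), V β φ₀⟫ + (β : ℂ) * h 0) * e5 -
      (β : ℂ) * hh0 - hbd +
      (⟪Xf, gaborOp U V a b m n φ₀⟫ -
        Complex.exp (Complex.I * lowPhi a b m n) * ⟪gaborOp U V a b (-m) (-n) φ₀, Xf⟫ +
        (β : ℂ) * h 0 * (Complex.exp (Complex.I * lowPhi a b m n) *
          Complex.exp (Complex.I * α * β - Complex.I * γ))) * Complex.I_mul_I
  -- the key symmetry identity for the P-coefficients
  have keyP : ∀ m n : ℤ,
      (starRingEnd ℂ) ⟪gaborOp U V a b m n φ₀, Pf⟫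
        = Complex.exp (Complex.I * lowPhi a b m n) * ⟪gaborOp U V a b (-m) (-n) φ₀, Pf⟫ := by
    intro m n
    have hαn : lowA a b (-m) (-n) = -(lowA a b m n) := by
      simp only [lowA]; push_cast; ring
    have hβn : lowB a b (-m) (-n) = -(lowB a b m n) := by
      simp only [lowB]; push_cast; ring
    have hγn : lowG a b (-m) (-n) = lowG a b m n := by
      simp only [lowG]; push_cast; ring
    set α := lowA a b m n with hαd
    set β := lowB a b m n with hβd
    set γ := lowG a b m n with hγd
    set h : ℝ → ℂ := fun s => ⟪U (-α) φ₀, V (β - s) φ₀⟫ with hhd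
    have redL : ∀ s : ℝ, ⟪V s φ₀, gaborOp U V a b m n φ₀⟫
        = Complex.exp (Complex.I * γ) * (Complex.exp (-(Complex.I * α) * s) * h s) := by
      intro s
      rw [gaborApp, ← hαd, ← hβd, ← hγd, inner_smul_right, adjV,
        weylVU α (-s) (V β φ₀), inner_smul_right, hVadd, adjU']
      have harg : (-s + β : ℝ) = β - s := by ring
      rw [harg]
      simp only [hhd]
      have hs2 : Complex.exp (Complex.I * (α : ℝ) * ((-s : ℝ) : ℂ))
          = Complex.exp (-(Complex.I * α) * s) := by
        congr 1
        push_cast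
        ring
      rw [hs2]
    have redR : ∀ s : ℝ, ⟪gaborOp U V a b (-m) (-n) φ₀, V (-s) φ₀⟫
        = Complex.exp (Complex.I * α * β - Complex.I * γ) * h s := by
      intro s
      rw [gaborApp, hαn, hβn, hγn, inner_smul_left, conj_exp_I]
      rw [adjU, neg_neg, weylUV α (-s) φ₀, inner_smul_right, adjV', neg_neg, hVadd,
        adjV (s + -β)]
      have harg : -(s + -β) = β - s := by ring
      rw [harg, weylVU α (β - s) φ₀, inner_smul_right, adjU']
      simp only [hhd]
      have hs3 : Complex.exp (-(Complex.I * γ)) *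
          Complex.exp (-(Complex.I * (α : ℝ) * ((-s : ℝ) : ℂ))) *
          Complex.exp (Complex.I * (α : ℝ) * ((β - s : ℝ) : ℂ))
            = Complex.exp (Complex.I * α * β - Complex.I * γ) := by
        rw [← Complex.exp_add, ← Complex.exp_add]
        congr 1
        push_cast
        ring
      rw [← mul_assoc, ← mul_assoc, hs3]
    have hD : HasDerivAt h ⟪U (-α) φ₀, -(V β (Complex.I • Pf))⟫ 0 := by
      have h1 : HasDerivAt (fun s : ℝ => β - s) (-1 : ℝ) 0 :=
        (hasDerivAt_id (0 : ℝ)).const_sub β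
      have h2 := HasDerivAt.scomp (x := (0 : ℝ)) (hVf (β - 0)) h1
      have h3 : HasDerivAt (fun s : ℝ => V (β - s) φ₀) (-(V β (Complex.I • Pf))) 0 := by
        simpa [Function.comp_def, sub_zero] using h2
      rw [hhd]
      exact hasDerivAt_inner_right (U (-α) φ₀) h3
    have dG : HasDerivAt (fun s : ℝ => ⟪V s φ₀, gaborOp U V a b m n φ₀⟫)
        ⟪Complex.I • Pf, gaborOp U V a b m n φ₀⟫ 0 := by
      have := hasDerivAt_inner_left (gaborOp U V a b m n φ₀) (hVf 0)
      simpa [hV0] using this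
    have dphα : HasDerivAt (fun s : ℝ => Complex.exp (-(Complex.I * α) * s))
        (-(Complex.I * α)) 0 := by
      simpa using hasDerivAt_expI (-(Complex.I * α)) 0
    have dG' := (dphα.mul hD).const_mul (Complex.exp (Complex.I * γ))
    simp only [Pi.mul_def] at dG'
    rw [show (fun s : ℝ => Complex.exp (Complex.I * γ) *
          (Complex.exp (-(Complex.I * α) * s) * h s))
        = fun s : ℝ => ⟪V s φ₀, gaborOp U V a b m n φ₀⟫ from
      funext fun s => (redL s).symm] at dG'
    have eqA := dG.unique dG'
    simp only [Complex.ofReal_zero, mul_zero, Complex.exp_zero, one_mul] at eqA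
    have dK : HasDerivAt (fun s : ℝ => ⟪gaborOp U V a b (-m) (-n) φ₀, V (-s) φ₀⟫)
        ⟪gaborOp U V a b (-m) (-n) φ₀, -(Complex.I • Pf)⟫ 0 :=
      hasDerivAt_inner_right _ hVneg
    have dK' := hD.const_mul (Complex.exp (Complex.I * α * β - Complex.I * γ))
    rw [show (fun s : ℝ => Complex.exp (Complex.I * α * β - Complex.I * γ) * h s)
        = fun s : ℝ => ⟪gaborOp U V a b (-m) (-n) φ₀, V (-s) φ₀⟫ from
      funext fun s => (redR s).symm] at dK'
    have eqB := dK.unique dK'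
    have hh0 : Complex.exp (Complex.I * γ) * h 0
        = (if m = 0 ∧ n = 0 then 1 else 0 : ℂ) := by
      have h1 := redL 0
      rw [hV0] at h1
      simp only [ContinuousLinearMap.one_apply, Complex.ofReal_zero, mul_zero,
        Complex.exp_zero, one_mul] at h1
      rw [← h1]
      exact horth2 m n
    have had : (α : ℂ) * (if m = 0 ∧ n = 0 then 1 else 0 : ℂ) = 0 := by
      rcases Classical.em (m = 0 ∧ n = 0) with hc | hc
      · obtain ⟨rfl, rfl⟩ := hc
        rw [hαd]
        simp [lowA]
      · simp [hc]
    have e5 : Complex.exp (Complex.I * lowPhi a b m n) *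
        Complex.exp (Complex.I * α * β - Complex.I * γ) = Complex.exp (Complex.I * γ) := by
      rw [← Complex.exp_add]
      congr 1
      rw [hαd, hβd, hγd]
      simp only [lowPhi]
      push_cast
      ring
    have hsm1 : ⟪Complex.I • Pf, gaborOp U V a b m n φ₀⟫
        = -(Complex.I * ⟪Pf, gaborOp U V a b m n φ₀⟫) := by
      rw [inner_smul_left, Complex.conj_I]
      ring
    have hsm2 : ⟪gaborOp U V a b (-m) (-n) φ₀, -(Complex.I • Pf)⟫
        = -(Complex.I * ⟪gaborOp U V a b (-m) (-n) φ₀, Pf⟫) := by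
      rw [inner_neg_right, inner_smul_right]
    rw [inner_conj_symm]
    linear_combination Complex.I * eqA -
      Complex.I * Complex.exp (Complex.I * lowPhi a b m n) * eqB -
      Complex.I * hsm1 + Complex.I * Complex.exp (Complex.I * lowPhi a b m n) * hsm2 -
      Complex.I * ⟪U (-α) φ₀, -(V β (Complex.I • Pf))⟫ * e5 +
      (α : ℂ) * hh0 + had +
      (⟪Pf, gaborOp U V a b m n φ₀⟫ -
        Complex.exp (Complex.I * γ) * (α : ℂ) * h 0 -
        Complex.exp (Complex.I * lowPhi a b m n) *
          ⟪gaborOp U V a b (-m) (-n) φ₀, Pf⟫) * Complex.I_mul_I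
  -- symmetry of the cross term via Parseval and reindexing by negation
  have phieven : ∀ i : ℤ × ℤ, lowPhi a b (-i.1) (-i.2) = lowPhi a b i.1 i.2 := by
    intro i
    simp only [lowPhi, lowA, lowB, lowG]
    push_cast
    ring
  have hre : ∑' i : ℤ × ℤ, ⟪Xf, gaborOp U V a b i.1 i.2 φ₀⟫ * ⟪gaborOp U V a b i.1 i.2 φ₀, Pf⟫
      = ∑' i : ℤ × ℤ, ⟪Pf, gaborOp U V a b i.1 i.2 φ₀⟫ * ⟪gaborOp U V a b i.1 i.2 φ₀, Xf⟫ := by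
    rw [← Equiv.tsum_eq (Equiv.neg (ℤ × ℤ))
      (fun i : ℤ × ℤ => ⟪Xf, gaborOp U V a b i.1 i.2 φ₀⟫ * ⟪gaborOp U V a b i.1 i.2 φ₀, Pf⟫)]
    refine tsum_congr fun i => ?_
    simp only [Equiv.neg_apply, Prod.fst_neg, Prod.snd_neg]
    have k1 := keyX (-i.1) (-i.2)
    rw [neg_neg, neg_neg, phieven i] at k1
    have k2 := keyP i.1 i.2
    rw [← inner_conj_symm Xf (gaborOp U V a b (-i.1) (-i.2) φ₀),
      ← inner_conj_symm Pf (gaborOp U V a b i.1 i.2 φ₀), k1, k2]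
    ring
  have hsym : ⟪Xf, Pf⟫ = ⟪Pf, Xf⟫ := by
    rw [← pars Xf Pf hXfS hPfS, hre, pars Pf Xf hPfS hXfS]
  -- the canonical commutation relation as a quadratic form on φ₀
  have hA : ∀ s : ℝ, ⟪Xf, V s φ₀⟫
      = -(s : ℂ) * ⟪V (-s) φ₀, φ₀⟫ + ⟪V (-s) φ₀, Xf⟫ := by
    intro s
    have red : ∀ t : ℝ, ⟪U t φ₀, V s φ₀⟫
        = Complex.exp ((Complex.I * s) * t) * ⟪V (-s) φ₀, U (-t) φ₀⟫ := by
      intro t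
      rw [adjU, weylUV (-t) s φ₀, inner_smul_right, adjV']
      have hs4 : Complex.exp (-(Complex.I * ((-t : ℝ) : ℂ) * (s : ℝ)))
          = Complex.exp ((Complex.I * s) * t) := by
        congr 1
        push_cast
        ring
      rw [hs4]
    have dL : HasDerivAt (fun t : ℝ => ⟪U t φ₀, V s φ₀⟫) ⟪Complex.I • Xf, V s φ₀⟫ 0 := by
      have := hasDerivAt_inner_left (V s φ₀) (hUf 0)
      simpa [hU0] using this
    have dq : HasDerivAt (fun t : ℝ => ⟪V (-s) φ₀, U (-t) φ₀⟫)
        ⟪V (-s) φ₀, -(Complex.I • Xf)⟫ 0 := hasDerivAt_inner_right _ hUneg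
    have dexp : HasDerivAt (fun t : ℝ => Complex.exp ((Complex.I * s) * t))
        (Complex.I * s) 0 := by
      simpa using hasDerivAt_expI (Complex.I * s) 0
    have h1 := dexp.mul dq
    simp only [Pi.mul_def] at h1
    rw [show (fun t : ℝ => Complex.exp ((Complex.I * s) * t) * ⟪V (-s) φ₀, U (-t) φ₀⟫)
        = fun t : ℝ => ⟪U t φ₀, V s φ₀⟫ from funext fun t => (red t).symm] at h1
    have h2 := dL.unique h1
    simp only [neg_zero, hU0, ContinuousLinearMap.one_apply, Complex.ofReal_zero, mul_zero,
      Complex.exp_zero, one_mul, inner_smul_left, inner_neg_right, inner_smul_right,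
      Complex.conj_I] at h2
    linear_combination Complex.I * h2 +
      (⟪Xf, V s φ₀⟫ + (s : ℂ) * ⟪V (-s) φ₀, φ₀⟫ - ⟪V (-s) φ₀, Xf⟫) * Complex.I_mul_I
  have dLHS : HasDerivAt (fun s : ℝ => ⟪Xf, V s φ₀⟫) (Complex.I * ⟪Xf, Pf⟫) 0 := by
    have := hasDerivAt_inner_right Xf (hVf 0)
    simpa [hV0, inner_smul_right] using this
  have dc1 : HasDerivAt (fun s : ℝ => ⟪V (-s) φ₀, φ₀⟫) ⟪-(Complex.I • Pf), φ₀⟫ 0 :=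
    hasDerivAt_inner_left φ₀ hVneg
  have dms : HasDerivAt (fun s : ℝ => -(s : ℂ)) (-1 : ℂ) 0 := by
    simpa [Pi.neg_def] using (Complex.ofRealCLM.hasDerivAt (x := (0 : ℝ))).neg
  have dc2 : HasDerivAt (fun s : ℝ => ⟪V (-s) φ₀, Xf⟫) ⟪-(Complex.I • Pf), Xf⟫ 0 :=
    hasDerivAt_inner_left Xf hVneg
  have hR := (dms.mul dc1).add dc2
  simp only [Pi.mul_def, Pi.add_def] at hR
  rw [show (fun s : ℝ => -(s : ℂ) * ⟪V (-s) φ₀, φ₀⟫ + ⟪V (-s) φ₀, Xf⟫)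
      = fun s : ℝ => ⟪Xf, V s φ₀⟫ from funext fun s => (hA s).symm] at hR
  have h3 := dLHS.unique hR
  have hdiff : Complex.I * ⟪Xf, Pf⟫ - Complex.I * ⟪Pf, Xf⟫ = -1 := by
    simp only [neg_zero, hV0, ContinuousLinearMap.one_apply, Complex.ofReal_zero,
      inner_neg_left, inner_smul_left, Complex.conj_I, normf, neg_mul, one_mul, mul_one,
      zero_mul, add_zero, zero_add, neg_neg, mul_neg] at h3
    linear_combination h3
  rw [hsym] at hdiff
  simp only [sub_self] at hdiff
  exact absurd hdiff (by norm_num)
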